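/- For a ring R the following are equivalent: (i) every R-module is a Σ-Rickart module; (ii) every R-module is a Σ-dual Rickart module; (iii) R is a semisimple (artinian) ring. -/

import Mathlib

universe u v

/-- A module `M` is dual-Rickart if the image of every endomorphism is a direct summand. -/
def IsDualRickart (R : Type u) [Ring R] (M : Type v) [AddCommGroup M] [Module R M] : Prop :=
  ∀ φ : M →ₗ[R] M, ∃ q : Submodule R M, IsCompl (LinearMap.range φ) q

/-- A module `M` is Σ-dual Rickart if every direct sum of copies of `M` is dual-Rickart. -/
def IsSigmaDualRickart (R : Type u) [Ring R] (M : Type v) [AddCommGroup M] [Module R M] :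
    Prop :=
  ∀ Λ : Type v, IsDualRickart R (Λ →₀ M)

/-- A module `M` is Rickart if the kernel of every endomorphism is a direct summand. -/
def IsRickart (R : Type u) [Ring R] (M : Type v) [AddCommGroup M] [Module R M] : Prop :=
  ∀ φ : M →ₗ[R] M, ∃ q : Submodule R M, IsCompl (LinearMap.ker φ) q

/-- A module `M` is Σ-Rickart if every direct sum of copies of `M` is Rickart. -/
def IsSigmaRickart (R : Type u) [Ring R] (M : Type v) [AddCommGroup M] [Module R M] : Prop :=
  ∀ Λ : Type v, IsRickart R (Λ →₀ M)

section Aux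

variable {R : Type u} [Ring R] {M N : Type u} [AddCommGroup M] [Module R M]
  [AddCommGroup N] [Module R N]

lemma isRickart_of_equiv (e : M ≃ₗ[R] N) (h : IsRickart R M) : IsRickart R N := by
  intro φ
  obtain ⟨q, hq⟩ := h (e.symm.toLinearMap ∘ₗ φ ∘ₗ e.toLinearMap)
  have hker : LinearMap.ker (e.symm.toLinearMap ∘ₗ φ ∘ₗ e.toLinearMap)
      = Submodule.comap e.toLinearMap (LinearMap.ker φ) := by
    ext x; simp
  rw [hker] at hq
  refine ⟨Submodule.map e.toLinearMap q, ?_⟩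
  have := (Submodule.orderIsoMapComapOfBijective e.toLinearMap e.bijective).isCompl hq
  simpa [Submodule.orderIsoMapComapOfBijective,
    Submodule.map_comap_eq_of_surjective (f := e.toLinearMap) e.surjective] using this

lemma isDualRickart_of_equiv (e : M ≃ₗ[R] N) (h : IsDualRickart R M) : IsDualRickart R N := by
  intro φ
  obtain ⟨q, hq⟩ := h (e.symm.toLinearMap ∘ₗ φ ∘ₗ e.toLinearMap)
  have hr : LinearMap.range (e.symm.toLinearMap ∘ₗ φ ∘ₗ e.toLinearMap)
      = Submodule.comap e.toLinearMap (LinearMap.range φ) := by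
    ext x
    simp only [LinearMap.mem_range, LinearMap.coe_comp, Function.comp_apply,
      Submodule.mem_comap, LinearEquiv.coe_coe]
    constructor
    · rintro ⟨y, rfl⟩; exact ⟨e y, by simp⟩
    · rintro ⟨y, hy⟩; exact ⟨e.symm y, by simp [hy]⟩
  rw [hr] at hq
  refine ⟨Submodule.map e.toLinearMap q, ?_⟩
  have := (Submodule.orderIsoMapComapOfBijective e.toLinearMap e.bijective).isCompl hq
  simpa [Submodule.orderIsoMapComapOfBijective,
    Submodule.map_comap_eq_of_surjective (f := e.toLinearMap) e.surjective] using this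

lemma complement_of_rickart (N : Submodule R M)
    (h : IsRickart R (M × (M ⧸ N))) : ∃ q, IsCompl N q := by
  set φ : (M × (M ⧸ N)) →ₗ[R] (M × (M ⧸ N)) :=
    (LinearMap.inr R M (M ⧸ N)) ∘ₗ N.mkQ ∘ₗ LinearMap.fst R M (M ⧸ N) with hφ
  have hker : LinearMap.ker φ = N.prod ⊤ := by
    ext x
    simp [hφ, Submodule.mem_prod, Submodule.Quotient.mk_eq_zero, Prod.ext_iff]
  obtain ⟨q, hq⟩ := h φ
  rw [hker] at hq
  refine ⟨q.map (LinearMap.fst R M (M ⧸ N)), ⟨?_, ?_⟩⟩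
  · rw [Submodule.disjoint_def]
    rintro x hxN hxq
    obtain ⟨⟨a, b⟩, hab, rfl⟩ := hxq
    have : (a, b) ∈ N.prod ⊤ := ⟨hxN, trivial⟩
    have h0 := Submodule.disjoint_def.mp hq.disjoint _ this hab
    simpa using congrArg Prod.fst h0
  · rw [codisjoint_iff, eq_top_iff]
    intro m _
    have : ((m : M), (0 : M ⧸ N)) ∈ N.prod ⊤ ⊔ q := by
      rw [hq.codisjoint.eq_top]; trivial
    obtain ⟨u, hu, v, hv, huv⟩ := Submodule.mem_sup.mp this
    rw [Submodule.mem_sup]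
    exact ⟨u.1, hu.1, v.1, ⟨v, hv, rfl⟩, by simpa using congrArg Prod.fst huv⟩

lemma complement_of_dualRickart (N : Submodule R M)
    (h : IsDualRickart R (M × ↥N)) : ∃ q, IsCompl N q := by
  set φ : (M × ↥N) →ₗ[R] (M × ↥N) :=
    (LinearMap.inl R M ↥N) ∘ₗ N.subtype ∘ₗ LinearMap.snd R M ↥N with hφ
  have hr : LinearMap.range φ = N.prod ⊥ := by
    ext x
    simp only [hφ, LinearMap.mem_range, LinearMap.coe_comp, Function.comp_apply,
      LinearMap.inl_apply, LinearMap.snd_apply, Submodule.coe_subtype,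
      Submodule.mem_prod, Submodule.mem_bot]
    constructor
    · rintro ⟨⟨a, b⟩, rfl⟩; exact ⟨b.2, rfl⟩
    · rintro ⟨h1, h2⟩
      exact ⟨(0, ⟨x.1, h1⟩), by simp [Prod.ext_iff, h2.symm]⟩
  obtain ⟨q, hq⟩ := h φ
  rw [hr] at hq
  refine ⟨q.comap (LinearMap.inl R M ↥N), ⟨?_, ?_⟩⟩
  · rw [Submodule.disjoint_def]
    rintro x hxN hxq
    have : ((x : M), (0 : ↥N)) ∈ N.prod ⊥ := ⟨hxN, rfl⟩
    have h0 := Submodule.disjoint_def.mp hq.disjoint _ this hxq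
    simpa using congrArg Prod.fst h0
  · rw [codisjoint_iff, eq_top_iff]
    intro m _
    have : ((m : M), (0 : ↥N)) ∈ N.prod ⊥ ⊔ q := by
      rw [hq.codisjoint.eq_top]; trivial
    obtain ⟨u, hu, v, hv, huv⟩ := Submodule.mem_sup.mp this
    rw [Submodule.mem_sup]
    refine ⟨u.1, hu.1, v.1, ?_, by simpa using congrArg Prod.fst huv⟩
    have hv2 : v.2 = 0 := by
      have := congrArg Prod.snd huv
      simp only [Prod.snd_add] at this
      rw [hu.2] at this
      simpa using this
    simpa [Submodule.mem_comap, LinearMap.inl_apply, Prod.ext_iff, hv2.symm] using hv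

end Aux

/-- For a ring `R`, the following are equivalent: every `R`-module is Σ-Rickart;
every `R`-module is Σ-dual Rickart; `R` is semisimple (artinian). -/
theorem stmt16 (R : Type u) [Ring R] :
    ((∀ (M : Type u) [AddCommGroup M] [Module R M], IsSigmaRickart R M) ↔
        IsSemisimpleRing R) ∧
      ((∀ (M : Type u) [AddCommGroup M] [Module R M], IsSigmaDualRickart R M) ↔
        IsSemisimpleRing R) := by
  constructor
  · constructor
    · intro h
      refine IsSemisimpleModule.mk (toComplementedLattice := ⟨fun N => ?_⟩)
      have h1 : IsRickart R (R × (R ⧸ N)) :=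
        isRickart_of_equiv (Finsupp.LinearEquiv.finsuppUnique R (R × (R ⧸ N)) PUnit.{u+1})
          (h (R × (R ⧸ N)) PUnit.{u+1})
      exact complement_of_rickart N h1
    · intro h M _ _ Λ φ
      exact exists_isCompl (LinearMap.ker φ)
  · constructor
    · intro h
      refine IsSemisimpleModule.mk (toComplementedLattice := ⟨fun N => ?_⟩)
      have h1 : IsDualRickart R (R × ↥N) :=
        isDualRickart_of_equiv (Finsupp.LinearEquiv.finsuppUnique R (R × ↥N) PUnit.{u+1})
          (h (R × ↥N) PUnit.{u+1})
      exact complement_of_dualRickart N h1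
    · intro h M _ _ Λ φ
      exact exists_isCompl (LinearMap.range φ)
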